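/- Let (S, E^Q) be a quantitative evidence frame with all p_i ∈ (0,1), let d be the minimum-dense-set evidence allocation function, and let J_SD be the strong denseness frame of justification (the set of nonempty elements of τ_E that intersect every nonempty element of τ_E). Define the qualitative belief operator B(P) = 1 iff there exists D ∈ τ_E with D ⊆ P and D ∩ T ≠ ∅ for all nonempty T ∈ τ_E. Then for every P ⊆ S: B(P) = 1 if and only if Bel_{J_SD}(d, P) > 0. -/
import Mathlib


open scoped Classical

/-- The mass function δ on subsets of the evidence index set. -/
noncomputable def evidMass {m : ℕ} (p : Fin m → ℝ) (B : Finset (Fin m)) : ℝ :=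
  (∏ i ∈ B, p i) * ∏ i ∈ Bᶜ, (1 - p i)

/-- `T` is a dense open set of the topology generated by the family `F`:
`T` is open, nonempty, and intersects every nonempty open set. -/
def DenseOpen {V : Type*} (F : Set (Set V)) (T : Set V) : Prop :=
  (TopologicalSpace.generateFrom F).IsOpen T ∧ T.Nonempty ∧
    ∀ U, (TopologicalSpace.generateFrom F).IsOpen U → U.Nonempty → (T ∩ U).Nonempty

/-- The pushed-forward mass `δ_τ(f, T)`. -/
noncomputable def deltaTau {V : Type*} [Fintype V] {m : ℕ}
    (E : Fin m → Set V) (p : Fin m → ℝ) (f : Finset (Fin m) → Set V)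
    (T : Set V) : ℝ :=
  if (TopologicalSpace.generateFrom (Set.range E)).IsOpen T then
    ∑ B : Finset (Fin m), if f B = T then evidMass p B else 0
  else 0

/-- The normalized mass restricted to the frame of justification `J`. -/
noncomputable def deltaJ {V : Type*} [Fintype V] {m : ℕ}
    (E : Fin m → Set V) (p : Fin m → ℝ) (f : Finset (Fin m) → Set V)
    (J : Set (Set V)) (A : Set V) : ℝ :=
  if A ∈ J then
    deltaTau E p f A / (∑ T : Set V, if T ∈ J then deltaTau E p f T else 0)
  else 0

/-- The multi-layer belief function `Bel_J(f, P) = ∑_{A ⊆ P} δ_J(f, A)`. -/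
noncomputable def belJ {V : Type*} [Fintype V] {m : ℕ}
    (E : Fin m → Set V) (p : Fin m → ℝ) (f : Finset (Fin m) → Set V)
    (J : Set (Set V)) (P : Set V) : ℝ :=
  ∑ A : Set V, if A ⊆ P then deltaJ E p f J A else 0

/-- The strong denseness frame of justification: all dense nonempty opens of `τ_E`. -/
def JSD {V : Type*} {m : ℕ} (E : Fin m → Set V) : Set (Set V) :=
  {T | DenseOpen (Set.range E) T}

lemma genOpen_empty_cases {V : Type*} {D : Set V}
    (h : TopologicalSpace.GenerateOpen (∅ : Set (Set V)) D) :
    D = ∅ ∨ D = Set.univ := by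
  induction h with
  | basic s hs => exact absurd hs (Set.notMem_empty s)
  | univ => exact Or.inr rfl
  | inter s t _ _ ihs iht =>
      rcases ihs with h|h <;> rcases iht with h'|h' <;> simp [h, h']
  | sUnion S _ ih =>
      by_cases hu : Set.univ ∈ S
      · exact Or.inr (Set.eq_univ_of_univ_subset (Set.subset_sUnion_of_mem hu))
      · left
        ext x
        simp only [Set.mem_sUnion, Set.mem_empty_iff_false, iff_false, not_exists, not_and]
        intro t ht hx
        rcases ih t ht with rfl | rfl
        · exact hx
        · exact hu ht

lemma evidMass_pos {m : ℕ} (p : Fin m → ℝ) (hp : ∀ i, p i ∈ Set.Ioo (0 : ℝ) 1)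
    (B : Finset (Fin m)) : 0 < evidMass p B := by
  unfold evidMass
  apply mul_pos
  · exact Finset.prod_pos fun i _ => (hp i).1
  · exact Finset.prod_pos fun i _ => by linarith [(hp i).2]

/-- with the minimum-dense-set allocation function `d` and the
strong denseness frame of justification `J_SD`, the multi-layer belief function
reproduces the topological belief operator: `B(P) = 1` (there is a dense open
`D ∈ τ_E` with `D ⊆ P`) iff `Bel_{J_SD}(d, P) > 0`. -/
theorem multilayer_reproduces_topological {V : Type*} [Fintype V] [Nonempty V] {m : ℕ}
    (E : Fin m → Set V) (p : Fin m → ℝ) (hp : ∀ i, p i ∈ Set.Ioo (0 : ℝ) 1)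
    (d : Finset (Fin m) → Set V)
    (hd0 : d ∅ = Set.univ)
    (hdmin : ∀ B : Finset (Fin m), B ≠ ∅ →
      DenseOpen (E '' ↑B) (d B) ∧ ∀ T, DenseOpen (E '' ↑B) T → d B ⊆ T) :
    ∀ P : Set V,
      (∃ D : Set V, (TopologicalSpace.generateFrom (Set.range E)).IsOpen D ∧ D ⊆ P ∧
        ∀ T, (TopologicalSpace.generateFrom (Set.range E)).IsOpen T → T.Nonempty →
          (D ∩ T).Nonempty)
      ↔ 0 < belJ E p d (JSD E) P := by
  intro P
  have hmass : ∀ B, 0 < evidMass p B := evidMass_pos p hp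
  have hdT_nonneg : ∀ T, 0 ≤ deltaTau E p d T := by
    intro T
    unfold deltaTau
    split
    · apply Finset.sum_nonneg
      intro B _
      split
      · exact (hmass B).le
      · exact le_refl 0
    · exact le_refl 0
  -- the top allocation d Finset.univ is in JSD
  have hA0mem : d (Finset.univ : Finset (Fin m)) ∈ JSD E := by
    by_cases hm : (Finset.univ : Finset (Fin m)) = ∅
    · rw [hm, hd0]
      refine ⟨(TopologicalSpace.generateFrom (Set.range E)).isOpen_univ, Set.univ_nonempty, ?_⟩
      intro U _ hU
      simpa using hU
    · have himg : E '' ↑(Finset.univ : Finset (Fin m)) = Set.range E := by simp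
      have := (hdmin Finset.univ hm).1
      rw [himg] at this
      exact this
  have hA0open : (TopologicalSpace.generateFrom (Set.range E)).IsOpen
      (d (Finset.univ : Finset (Fin m))) := hA0mem.1
  have hdT_pos : 0 < deltaTau E p d (d (Finset.univ : Finset (Fin m))) := by
    unfold deltaTau
    rw [if_pos hA0open]
    apply Finset.sum_pos'
    · intro B _
      split
      · exact (hmass B).le
      · exact le_refl 0
    · exact ⟨Finset.univ, Finset.mem_univ _, by rw [if_pos rfl]; exact hmass _⟩
  have hZpos : 0 < ∑ T : Set V, if T ∈ JSD E then deltaTau E p d T else 0 := by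
    apply Finset.sum_pos'
    · intro T _
      split
      · exact hdT_nonneg T
      · exact le_refl 0
    · exact ⟨d (Finset.univ : Finset (Fin m)), Finset.mem_univ _, by
        rw [if_pos hA0mem]; exact hdT_pos⟩
  constructor
  · rintro ⟨D, hDopen, hDP, hDdense⟩
    have hDne : D.Nonempty := by
      have := hDdense Set.univ (TopologicalSpace.generateFrom (Set.range E)).isOpen_univ Set.univ_nonempty
      rwa [Set.inter_univ] at this
    have hA0P : d (Finset.univ : Finset (Fin m)) ⊆ P := by
      by_cases hm : (Finset.univ : Finset (Fin m)) = ∅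
      · rw [hm, hd0]
        have hEmp : IsEmpty (Fin m) := Finset.univ_eq_empty_iff.mp hm
        have hr : Set.range E = ∅ := Set.range_eq_empty E
        rw [hr] at hDopen
        rcases genOpen_empty_cases hDopen with rfl | rfl
        · exact absurd hDne (by simp)
        · exact hDP
      · have himg : E '' ↑(Finset.univ : Finset (Fin m)) = Set.range E := by simp
        have hmin := (hdmin Finset.univ hm).2 D (by rw [himg]; exact ⟨hDopen, hDne, hDdense⟩)
        exact hmin.trans hDP
    unfold belJ
    apply Finset.sum_pos'
    · intro A _
      split
      · unfold deltaJ
        split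
        · exact div_nonneg (hdT_nonneg A) hZpos.le
        · exact le_refl 0
      · exact le_refl 0
    · refine ⟨d (Finset.univ : Finset (Fin m)), Finset.mem_univ _, ?_⟩
      rw [if_pos hA0P]
      unfold deltaJ
      rw [if_pos hA0mem]
      exact div_pos hdT_pos hZpos
  · intro h
    by_contra hcon
    have : belJ E p d (JSD E) P = 0 := by
      unfold belJ
      apply Finset.sum_eq_zero
      intro A _
      split_ifs with hAP
      · unfold deltaJ
        rw [if_neg (fun hAJ => hcon ⟨A, hAJ.1, hAP, hAJ.2.2⟩)]
      · rfl
    rw [this] at h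
    exact lt_irrefl 0 h
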